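/- The configuration space with sinks Conf^{\{0,1\}}_2([0,1]) of two points in the unit interval, where both points are allowed to coincide only at the endpoints 0 and 1, is path-connected, whereas Conf_2([0,1]) (no sinks) has exactly two path components. -/

import Mathlib

open Set

/-- The unit interval `[0,1]`. -/
abbrev UI := Icc (0 : ℝ) 1

/-- The configuration space of two points in `[0,1]` with sinks `{0,1}`: the two
particles may coincide only at the endpoints. -/
def confSink2 : Set (UI × UI) :=
  {p | p.1 ≠ p.2 ∨ (p.1 = p.2 ∧ ((p.1 : ℝ) = 0 ∨ (p.1 : ℝ) = 1))}

/-- The ordinary two-point configuration space of `[0,1]`. -/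
def conf2 : Set (UI × UI) := {p | p.1 ≠ p.2}

lemma lerp_mem_UI (u v : UI) (t : ℝ) (h0 : 0 ≤ t) (h1 : t ≤ 1) :
    (1 - t) * (u : ℝ) + t * (v : ℝ) ∈ Icc (0 : ℝ) 1 := by
  constructor
  · nlinarith [u.2.1, v.2.1]
  · nlinarith [u.2.2, v.2.2]

/-- Straight-line segments give joinedness, provided every intermediate point is in `S`. -/
lemma joinedIn_seg {S : Set (UI × UI)} (a b : UI × UI)
    (h : ∀ t : ℝ, 0 ≤ t → t ≤ 1 → ∀ q : UI × UI,
      (q.1 : ℝ) = (1 - t) * (a.1 : ℝ) + t * (b.1 : ℝ) →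
      (q.2 : ℝ) = (1 - t) * (a.2 : ℝ) + t * (b.2 : ℝ) → q ∈ S) :
    JoinedIn S a b := by
  refine ⟨⟨⟨fun t =>
      (⟨(1 - (t : ℝ)) * (a.1 : ℝ) + (t : ℝ) * (b.1 : ℝ), lerp_mem_UI _ _ _ t.2.1 t.2.2⟩,
       ⟨(1 - (t : ℝ)) * (a.2 : ℝ) + (t : ℝ) * (b.2 : ℝ), lerp_mem_UI _ _ _ t.2.1 t.2.2⟩),
      by fun_prop⟩, ?_, ?_⟩, ?_⟩
  · ext <;> simp
  · ext <;> simp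
  · intro t
    exact h t t.2.1 t.2.2 _ rfl rfl

theorem confSink_interval_two_points :
    IsPathConnected confSink2 ∧
    (let C₁ : Set (UI × UI) := {p | (p.1 : ℝ) < (p.2 : ℝ)}
     let C₂ : Set (UI × UI) := {p | (p.2 : ℝ) < (p.1 : ℝ)}
     C₁ ∪ C₂ = conf2 ∧ Disjoint C₁ C₂ ∧
     IsPathConnected C₁ ∧ IsPathConnected C₂ ∧
     ∀ x ∈ C₁, ∀ y ∈ C₂, ¬ JoinedIn conf2 x y) := by
  have h0 : (0 : ℝ) ∈ Icc (0:ℝ) 1 := by norm_num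
  have h1 : (1 : ℝ) ∈ Icc (0:ℝ) 1 := by norm_num
  set z : UI := ⟨0, h0⟩ with hzdef
  set o : UI := ⟨1, h1⟩ with hodef
  have hz : (z : ℝ) = 0 := rfl
  have ho : (o : ℝ) = 1 := rfl
  have memS : ∀ q : UI × UI, (q.1 : ℝ) ≠ (q.2 : ℝ) → q ∈ confSink2 := by
    intro q hq
    exact Or.inl (fun h => hq (by rw [h]))
  have memSink : ∀ q : UI × UI, (q.1 : ℝ) = (q.2 : ℝ) →
      ((q.1 : ℝ) = 0 ∨ (q.1 : ℝ) = 1) → q ∈ confSink2 := by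
    intro q h he
    exact Or.inr ⟨Subtype.ext h, he⟩
  constructor
  · -- path-connectedness of confSink2
    refine ⟨(z, z), memSink _ rfl (Or.inl rfl), ?_⟩
    intro p hp
    suffices h : JoinedIn confSink2 p (z, z) from h.symm
    have hz1z : JoinedIn confSink2 (z, o) (z, z) := by
      apply joinedIn_seg
      intro t ht0 ht1 q hq1 hq2
      simp only [hz, ho] at hq1 hq2
      rcases lt_or_ge t 1 with ht | ht
      · apply memS
        rw [hq1, hq2]
        intro hEq; nlinarith
      · have : t = 1 := le_antisymm ht1 ht
        subst this
        exact memSink q (by rw [hq1, hq2]; ring) (Or.inl (by rw [hq1]; ring))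
    have ho0z : JoinedIn confSink2 (o, z) (z, z) := by
      apply joinedIn_seg
      intro t ht0 ht1 q hq1 hq2
      simp only [hz, ho] at hq1 hq2
      rcases lt_or_ge t 1 with ht | ht
      · apply memS
        rw [hq1, hq2]
        intro hEq; nlinarith
      · have : t = 1 := le_antisymm ht1 ht
        subst this
        exact memSink q (by rw [hq1, hq2]; ring) (Or.inl (by rw [hq1]; ring))
    have hooz : JoinedIn confSink2 (o, o) (z, z) := by
      have step : JoinedIn confSink2 (o, o) (o, z) := by
        apply joinedIn_seg
        intro t ht0 ht1 q hq1 hq2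
        simp only [hz, ho] at hq1 hq2
        rcases lt_or_ge 0 t with ht | ht
        · apply memS
          rw [hq1, hq2]
          intro hEq; nlinarith
        · have : t = 0 := le_antisymm ht ht0
          subst this
          exact memSink q (by rw [hq1, hq2]; ring) (Or.inr (by rw [hq1]; ring))
      exact step.trans ho0z
    rcases lt_trichotomy (p.1 : ℝ) (p.2 : ℝ) with hlt | heq | hgt
    · have step : JoinedIn confSink2 p (z, o) := by
        apply joinedIn_seg
        intro t ht0 ht1 q hq1 hq2
        simp only [hz, ho] at hq1 hq2
        apply memS
        rw [hq1, hq2]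
        intro hEq
        rcases lt_or_ge t 1 with ht | ht
        · nlinarith
        · have : t = 1 := le_antisymm ht1 ht
          subst this; norm_num at hEq
      exact step.trans hz1z
    · have hval : p.1 = p.2 := Subtype.ext heq
      rcases hp with hne | ⟨_, hends⟩
      · exact absurd hval hne
      rcases hends with h0' | h1'
      · have hpz : p = (z, z) := by
          have e1 : p.1 = z := Subtype.ext h0'
          have e2 : p.2 = z := hval ▸ e1
          exact Prod.ext e1 e2
        rw [hpz]
        exact JoinedIn.refl (memSink _ rfl (Or.inl rfl))
      · have hpo : p = (o, o) := by
          have e1 : p.1 = o := Subtype.ext h1'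
          have e2 : p.2 = o := hval ▸ e1
          exact Prod.ext e1 e2
        rw [hpo]; exact hooz
    · have step : JoinedIn confSink2 p (o, z) := by
        apply joinedIn_seg
        intro t ht0 ht1 q hq1 hq2
        simp only [hz, ho] at hq1 hq2
        apply memS
        rw [hq1, hq2]
        intro hEq
        rcases lt_or_ge t 1 with ht | ht
        · nlinarith
        · have : t = 1 := le_antisymm ht1 ht
          subst this; norm_num at hEq
      exact step.trans ho0z
  · intro C₁ C₂
    refine ⟨?_, ?_, ?_, ?_, ?_⟩
    · ext p
      simp only [C₁, C₂, conf2, mem_union, mem_setOf_eq]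
      constructor
      · rintro (h | h) he <;> rw [he] at h <;> exact lt_irrefl _ h
      · intro h
        rcases lt_trichotomy (p.1 : ℝ) (p.2 : ℝ) with h' | h' | h'
        · exact Or.inl h'
        · exact absurd (Subtype.ext h') h
        · exact Or.inr h'
    · rw [disjoint_left]
      intro p h1' h2'
      simp only [C₁, C₂, mem_setOf_eq] at h1' h2'
      linarith
    · refine ⟨(z, o), show (0:ℝ) < 1 by norm_num, ?_⟩
      intro p hp
      have hplt : (p.1 : ℝ) < (p.2 : ℝ) := hp
      refine JoinedIn.symm ?_
      apply joinedIn_seg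
      intro t ht0 ht1 q hq1 hq2
      show (q.1 : ℝ) < (q.2 : ℝ)
      rw [hq1, hq2]
      simp only [hz, ho]
      rcases lt_or_ge t 1 with ht | ht
      · nlinarith
      · have : t = 1 := le_antisymm ht1 ht
        subst this; linarith
    · refine ⟨(o, z), show (0:ℝ) < 1 by norm_num, ?_⟩
      intro p hp
      have hplt : (p.2 : ℝ) < (p.1 : ℝ) := hp
      refine JoinedIn.symm ?_
      apply joinedIn_seg
      intro t ht0 ht1 q hq1 hq2
      show (q.2 : ℝ) < (q.1 : ℝ)
      rw [hq1, hq2]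
      simp only [hz, ho]
      rcases lt_or_ge t 1 with ht | ht
      · nlinarith
      · have : t = 1 := le_antisymm ht1 ht
        subst this; linarith
    · rintro x hx y hy ⟨γ, hγ⟩
      set f : ℝ → ℝ := fun t => ((γ.extend t).1 : ℝ) - ((γ.extend t).2 : ℝ) with hf
      have hcont : ContinuousOn f (Icc 0 1) := by
        apply Continuous.continuousOn
        fun_prop
      have hf0 : f 0 < 0 := by
        simp only [hf, Path.extend_zero]
        have : (x.1 : ℝ) < (x.2 : ℝ) := hx
        linarith
      have hf1 : 0 < f 1 := by
        simp only [hf, Path.extend_one]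
        have : (y.2 : ℝ) < (y.1 : ℝ) := hy
        linarith
      have hiv : (0 : ℝ) ∈ f '' (Icc 0 1) := by
        apply intermediate_value_Icc (by norm_num : (0:ℝ) ≤ 1) hcont
        exact ⟨le_of_lt hf0, le_of_lt hf1⟩
      obtain ⟨t, ht, hft⟩ := hiv
      have hmem := hγ ⟨t, ht⟩
      simp only [hf, γ.extend_apply ht] at hft
      exact hmem (Subtype.ext (by linarith))
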